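/- Let n, m be integers with 0 ≤ n < m. Then ∑_{a=0}^m [m,a]_q · (q^n z)^a q^{a(a−1)} / ( (z^{−1} q^{2−2m})_{m−a} · (q^n z)_a ) = 0 in the field ℚ(q,z); that is, the sl_2 fermionic sum X^{(0,n)}_m(q,z) vanishes whenever the corner angle n is a non-negative integer and m > n. -/

import Mathlib

/- STATEMENT 6: vanishing of the sl_2 fermionic sum X^{(0,n)}_m(q,z) for
   integers 0 ≤ n < m:
   ∑_{a=0}^m [m,a]_q (q^n z)^a q^{a(a−1)} / ((z⁻¹q^{2−2m})_{m−a} (q^n z)_a) = 0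
   in the field ℚ(q,z). -/

noncomputable section

open scoped BigOperators

/-- The field ℚ(q,z). -/
abbrev F6 : Type := FractionRing (MvPolynomial (Fin 2) ℚ)

def q6 : F6 := algebraMap (MvPolynomial (Fin 2) ℚ) F6 (MvPolynomial.X 0)
def z6 : F6 := algebraMap (MvPolynomial (Fin 2) ℚ) F6 (MvPolynomial.X 1)

/-- `(x)_n = ∏_{i=1}^n (1 - q^{i-1} x)` -/
def poch6 (x : F6) (n : ℕ) : F6 := ∏ i ∈ Finset.range n, (1 - q6 ^ i * x)

/-- `(q)_n = ∏_{k=1}^n (1 - q^k)` -/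
def qp6 (n : ℕ) : F6 := ∏ k ∈ Finset.range n, (1 - q6 ^ (k + 1))

/-- q-binomial coefficient `[m,a]_q = (q)_m / ((q)_a (q)_{m-a})` -/
def qbinom6 (m a : ℕ) : F6 := qp6 m / (qp6 a * qp6 (m - a))

open Finset

/-! ### Auxiliary lemmas -/

lemma map_ne (p : MvPolynomial (Fin 2) ℚ) (f : Fin 2 → ℚ) (h : MvPolynomial.eval f p ≠ 0) :
    algebraMap (MvPolynomial (Fin 2) ℚ) F6 p ≠ 0 := by
  intro h0
  have hinj := IsFractionRing.injective (MvPolynomial (Fin 2) ℚ) F6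
  have : p = 0 := by apply hinj; simpa using h0
  exact h (by simp [this])

lemma q6_ne : q6 ≠ 0 := map_ne _ (fun _ => 1) (by simp)
lemma z6_ne : z6 ≠ 0 := map_ne _ (fun _ => 1) (by simp)

lemma one_sub_qk_ne (k : ℕ) (hk : k ≠ 0) : (1 : F6) - q6 ^ k ≠ 0 := by
  have : (1:F6) - q6^k = algebraMap (MvPolynomial (Fin 2) ℚ) F6 (1 - MvPolynomial.X 0 ^ k) := by
    simp [q6, map_pow]
  rw [this]
  exact map_ne _ (fun _ => 0) (by simp [zero_pow hk])

lemma one_sub_qkz_ne (k : ℕ) : (1 : F6) - q6 ^ k * z6 ≠ 0 := by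
  have : (1:F6) - q6^k * z6
      = algebraMap (MvPolynomial (Fin 2) ℚ) F6 (1 - MvPolynomial.X 0 ^ k * MvPolynomial.X 1) := by
    simp [q6, z6, map_pow]
  rw [this]
  exact map_ne _ (fun _ => 0) (by simp)

lemma zqk_sub_qi_ne (K i : ℕ) : z6 * q6 ^ K - q6 ^ i ≠ 0 := by
  have : z6 * q6^K - q6^i
      = algebraMap (MvPolynomial (Fin 2) ℚ) F6
          (MvPolynomial.X 1 * MvPolynomial.X 0 ^ K - MvPolynomial.X 0 ^ i) := by
    simp [q6, z6, map_pow]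
  rw [this]
  exact map_ne _ (fun j => if j = 0 then 1 else 2) (by norm_num)

lemma qp6_ne (n : ℕ) : qp6 n ≠ 0 := by
  rw [qp6]
  exact Finset.prod_ne_zero_iff.mpr (fun k _ => one_sub_qk_ne (k+1) (by omega))

lemma qp6_succ (n : ℕ) : qp6 (n+1) = qp6 n * (1 - q6^(n+1)) := Finset.prod_range_succ _ _

lemma poch6_succ (x : F6) (k : ℕ) : poch6 x (k+1) = poch6 x k * (1 - q6 ^ k * x) :=
  Finset.prod_range_succ _ _

lemma poch6_succ' (x : F6) (k : ℕ) : poch6 x (k+1) = (1 - x) * poch6 (q6 * x) k := by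
  rw [poch6, Finset.prod_range_succ']
  simp only [pow_zero, one_mul]
  rw [mul_comm]
  congr 1
  apply Finset.prod_congr rfl
  intro i _
  ring

lemma poch6_add (x : F6) (a k : ℕ) : poch6 x (a+k) = poch6 x a * poch6 (q6^a * x) k := by
  rw [poch6, poch6, poch6, Finset.prod_range_add]
  congr 1
  apply Finset.prod_congr rfl
  intro i _
  rw [pow_add]
  ring

lemma poch6_qz_ne (c k : ℕ) : poch6 (q6^c * z6) k ≠ 0 := by
  rw [poch6]
  apply Finset.prod_ne_zero_iff.mpr
  intro i _
  have : 1 - q6^i * (q6^c * z6) = 1 - q6^(i+c) * z6 := by rw [pow_add]; ring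
  rw [this]
  exact one_sub_qkz_ne _

lemma one_sub_Y_ne (K i : ℕ) : (1:F6) - q6^i * (z6⁻¹ * (q6^K)⁻¹) ≠ 0 := by
  intro h0
  have hv : z6 * q6^K ≠ 0 := mul_ne_zero z6_ne (pow_ne_zero _ q6_ne)
  have hfac : ((1:F6) - q6^i * (z6⁻¹ * (q6^K)⁻¹)) * (z6 * q6^K) = z6 * q6^K - q6^i := by
    field_simp
    rw [mul_sub, mul_one, mul_div_assoc', mul_div_cancel_left₀ _ hv]
  rw [h0, zero_mul] at hfac
  exact zqk_sub_qi_ne K i hfac.symm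

lemma poch6_Y_ne (K k : ℕ) : poch6 (z6⁻¹ * (q6^K)⁻¹) k ≠ 0 := by
  rw [poch6]
  apply Finset.prod_ne_zero_iff.mpr
  intro i _
  exact one_sub_Y_ne K i

/-! ### The polynomial q-binomial and its identification with `qbinom6` -/

def gb6 : ℕ → ℕ → F6
  | 0, 0 => 1
  | 0, _+1 => 0
  | _+1, 0 => 1
  | m+1, b+1 => gb6 m (b+1) + q6 ^ (m - b) * gb6 m b

lemma gb6_zero : ∀ m, gb6 m 0 = 1 := by intro m; cases m <;> rfl

lemma gb6_of_lt : ∀ m a : ℕ, m < a → gb6 m a = 0 := by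
  intro m
  induction m with
  | zero => intro a ha; match a, ha with | (k+1), _ => rfl
  | succ m ih =>
    intro a ha
    match a, ha with
    | (b+1), hb =>
      have h1 : m < b + 1 := by omega
      have h2 : m < b := by omega
      show gb6 m (b+1) + q6 ^ (m-b) * gb6 m b = 0
      rw [ih _ h1, ih _ h2]; ring

lemma qbinom6_zero (m : ℕ) : qbinom6 m 0 = 1 := by
  rw [qbinom6, show qp6 0 = 1 from rfl, Nat.sub_zero, one_mul]
  exact div_self (qp6_ne m)

lemma qbinom6_self (m : ℕ) : qbinom6 m m = 1 := by
  rw [qbinom6]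
  simp only [Nat.sub_self]
  rw [show qp6 0 = 1 from rfl, mul_one]
  exact div_self (qp6_ne m)

lemma qbinom6_pascal (m b : ℕ) (hb : b < m) :
    qbinom6 (m+1) (b+1) = qbinom6 m (b+1) + q6^(m-b) * qbinom6 m b := by
  have h1 : m + 1 - (b+1) = m - b := by omega
  have h2 : qp6 (m+1) = qp6 m * (1 - q6^(m+1)) := qp6_succ m
  have h3 : qp6 (m-b) = qp6 (m-b-1) * (1 - q6^(m-b)) := by
    have : m - b = (m-b-1) + 1 := by omega
    rw [this, qp6_succ]
    simp
  have h4 : m - (b+1) = m - b - 1 := by omega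
  have h5 : qp6 (b+1) = qp6 b * (1 - q6^(b+1)) := qp6_succ b
  have h9 : q6^(m-b) * q6^(b+1) = q6^(m+1) := by rw [← pow_add]; congr 1; omega
  have hkey : (1:F6) - q6^(m+1) = (1 - q6^(m-b)) + q6^(m-b) * (1 - q6^(b+1)) := by
    linear_combination h9
  rw [qbinom6, qbinom6, qbinom6, h1, h4, h2, h3, h5, hkey]
  have n1 := qp6_ne b
  have n2 := qp6_ne (m-b-1)
  have n3 : (1:F6) - q6^(b+1) ≠ 0 := one_sub_qk_ne _ (by omega)
  have n4 : (1:F6) - q6^(m-b) ≠ 0 := one_sub_qk_ne _ (by omega)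
  field_simp

lemma gb6_eq : ∀ m a : ℕ, a ≤ m → gb6 m a = qbinom6 m a := by
  intro m
  induction m with
  | zero =>
    intro a ha
    interval_cases a
    rw [show gb6 0 0 = 1 from rfl, qbinom6_zero]
  | succ m ih =>
    intro a ha
    match a with
    | 0 => rw [show gb6 (m+1) 0 = 1 from rfl, qbinom6_zero]
    | (b+1) =>
      rcases Nat.lt_or_ge b m with hb | hb
      · show gb6 m (b+1) + q6 ^ (m-b) * gb6 m b = _
        rw [ih (b+1) (by omega), ih b (by omega), qbinom6_pascal m b hb]
      · have hbm : b = m := by omega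
        subst hbm
        show gb6 b (b+1) + q6 ^ (b-b) * gb6 b b = _
        rw [gb6_of_lt b (b+1) (by omega), ih b le_rfl, qbinom6_self, qbinom6_self]
        simp

/-! ### The key Gauss-type summation -/

lemma star (m : ℕ) : ∀ v w : F6,
    ∑ a ∈ Finset.range (m+1),
      gb6 m a * (-1)^a * q6 ^ (∑ i ∈ Finset.range a, i) * v^a * poch6 w a *
        poch6 (q6^a * v * w) (m-a)
    = poch6 v m := by
  induction m with
  | zero => intro v w; simp [poch6, gb6]
  | succ M ih =>
    intro v w
    rw [Finset.sum_range_succ']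
    have hsplit : ∀ b ∈ Finset.range (M+1),
        gb6 (M+1) (b+1) * (-1)^(b+1) * q6 ^ (∑ i ∈ Finset.range (b+1), i) * v^(b+1) *
          poch6 w (b+1) * poch6 (q6^(b+1) * v * w) (M+1-(b+1))
        = (gb6 M (b+1) * (-1)^(b+1) * q6 ^ (∑ i ∈ Finset.range (b+1), i) * v^(b+1) *
            poch6 w (b+1) * poch6 (q6^(b+1) * v * w) (M-b))
          + (-(v * q6^M * (1-w))) *
            (gb6 M b * (-1)^b * q6 ^ (∑ i ∈ Finset.range b, i) * v^b *
              poch6 (q6*w) b * poch6 (q6^b * v * (q6*w)) (M-b)) := by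
      intro b hbr
      have hble : b ≤ M := by simp at hbr; omega
      have h1 : gb6 (M+1) (b+1) = gb6 M (b+1) + q6^(M-b) * gb6 M b := rfl
      have h2 : M + 1 - (b+1) = M - b := by omega
      have h3 : (∑ i ∈ Finset.range (b+1), i) = (∑ i ∈ Finset.range b, i) + b :=
        Finset.sum_range_succ _ _
      have h4 : poch6 w (b+1) = (1-w) * poch6 (q6*w) b := poch6_succ' w b
      have h5' : poch6 (q6^(b+1)*v*w) (M-b) = poch6 (q6^b*v*(q6*w)) (M-b) := by
        rw [show q6^(b+1)*v*w = q6^b*v*(q6*w) from by ring]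
      have h3' : q6 ^ (∑ i ∈ Finset.range (b+1), i)
          = q6 ^ (∑ i ∈ Finset.range b, i) * q6^b := by
        rw [h3, pow_add]
      have h9 : q6^b * q6^(M-b) = q6^M := by rw [← pow_add]; congr 1; omega
      rw [h1, h2, h5', h3', h4]
      linear_combination ((-1)^(b+1) * (1-w) * gb6 M b * q6^(∑ i ∈ Finset.range b, i) * v^(b+1) *
        poch6 (q6*w) b * poch6 (q6^b*v*(q6*w)) (M-b)) * h9
    rw [Finset.sum_congr rfl hsplit, Finset.sum_add_distrib]
    have e2 : ∑ b ∈ Finset.range (M+1),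
        (-(v * q6^M * (1-w))) *
          (gb6 M b * (-1)^b * q6 ^ (∑ i ∈ Finset.range b, i) * v^b *
            poch6 (q6*w) b * poch6 (q6^b * v * (q6*w)) (M-b))
        = (-(v * q6^M * (1-w))) * poch6 v M := by
      rw [← Finset.mul_sum, ih v (q6*w)]
    rw [e2]
    have key1 :
        (gb6 (M+1) 0 * (-1)^0 * q6 ^ (∑ i ∈ Finset.range 0, i) * v^0 * poch6 w 0 *
          poch6 (q6^0 * v * w) (M+1-0))
        + ∑ b ∈ Finset.range (M+1),
            (gb6 M (b+1) * (-1)^(b+1) * q6 ^ (∑ i ∈ Finset.range (b+1), i) * v^(b+1) *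
              poch6 w (b+1) * poch6 (q6^(b+1) * v * w) (M-b))
        = (1 - q6^M * (v*w)) * poch6 v M := by
      have hg : ∀ a : ℕ, a ≤ M →
          (1 - q6^M*(v*w)) * (gb6 M a * (-1)^a * q6 ^ (∑ i ∈ Finset.range a, i) * v^a *
            poch6 w a * poch6 (q6^a * v * w) (M-a))
          = gb6 M a * (-1)^a * q6 ^ (∑ i ∈ Finset.range a, i) * v^a *
            poch6 w a * poch6 (q6^a * v * w) (M+1-a) := by
        intro a ha
        have h6 : M + 1 - a = (M - a) + 1 := by omega
        have h7 : poch6 (q6^a*v*w) ((M-a)+1)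
            = poch6 (q6^a*v*w) (M-a) * (1 - q6^(M-a) * (q6^a*v*w)) := poch6_succ _ _
        have h8 : q6^(M-a) * q6^a = q6^M := by rw [← pow_add]; congr 1; omega
        rw [h6, h7]
        linear_combination (gb6 M a * (-1)^a * q6 ^ (∑ i ∈ Finset.range a, i) * v^a *
          poch6 w a * poch6 (q6^a*v*w) (M-a) * (v*w)) * h8
      rw [← ih v w, Finset.mul_sum]
      rw [Finset.sum_congr rfl (fun a har => hg a (by simp at har; omega))]
      rw [Finset.sum_range_succ' (fun a => gb6 M a * (-1)^a * q6 ^ (∑ i ∈ Finset.range a, i) *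
            v^a * poch6 w a * poch6 (q6^a * v * w) (M+1-a)) M]
      rw [Finset.sum_range_succ]
      have htop : gb6 M (M+1) * (-1)^(M+1) * q6 ^ (∑ i ∈ Finset.range (M+1), i) * v^(M+1) *
          poch6 w (M+1) * poch6 (q6^(M+1) * v * w) (M-M) = 0 := by
        rw [gb6_of_lt M (M+1) (by omega)]; ring
      have hbs : ∀ b ∈ Finset.range M,
          gb6 M (b+1) * (-1)^(b+1) * q6 ^ (∑ i ∈ Finset.range (b+1), i) * v^(b+1) *
            poch6 w (b+1) * poch6 (q6^(b+1) * v * w) (M-b)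
          = gb6 M (b+1) * (-1)^(b+1) * q6 ^ (∑ i ∈ Finset.range (b+1), i) * v^(b+1) *
            poch6 w (b+1) * poch6 (q6^(b+1) * v * w) (M+1-(b+1)) := by
        intro b hbr
        congr 1
        congr 1
        omega
      rw [htop, Finset.sum_congr rfl hbs]
      have hzero : gb6 (M+1) 0 * (-1)^0 * q6 ^ (∑ i ∈ Finset.range 0, i) * v^0 * poch6 w 0 *
          poch6 (q6^0 * v * w) (M+1-0)
          = gb6 M 0 * (-1)^0 * q6 ^ (∑ i ∈ Finset.range 0, i) * v^0 * poch6 w 0 *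
            poch6 (q6^0 * v * w) (M+1-0) := by
        rw [gb6_zero, gb6_zero]
      rw [hzero]
      ring
    rw [poch6_succ]
    linear_combination key1

/-! ### Reflection of the `y`-Pochhammer factor -/

lemma hK_lemma (m a : ℕ) (ha : a ≤ m) (hm : 1 ≤ m) :
    poch6 (q6^(m-a) * (z6⁻¹ * (q6^(2*m-2))⁻¹)) a
    = (-1)^a * q6^(a*(m-a) + (∑ i ∈ Finset.range a, i)) * (q6^((2*m-2)*a))⁻¹ * (z6^a)⁻¹
      * poch6 (q6^(m-1)*z6) a := by
  rw [poch6]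
  have hterm : ∀ i ∈ Finset.range a,
      1 - q6^i * (q6^(m-a) * (z6⁻¹ * (q6^(2*m-2))⁻¹))
      = (-(q6^(m-a+i)) * ((q6^(2*m-2))⁻¹ * z6⁻¹)) * (1 - q6^(a-1-i) * (q6^(m-1)*z6)) := by
    intro i hi
    have hilt : i < a := Finset.mem_range.mp hi
    have hx : q6^(m-a+i) * (q6^(a-1-i) * q6^(m-1)) = q6^(2*m-2) := by
      rw [← pow_add, ← pow_add]
      congr 1
      omega
    have hL : q6^i * q6^(m-a) = q6^(m-a+i) := by rw [← pow_add]; congr 1; omega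
    have hz : z6 * z6⁻¹ = 1 := mul_inv_cancel₀ z6_ne
    have hQ : q6^(2*m-2) * (q6^(2*m-2))⁻¹ = 1 := mul_inv_cancel₀ (pow_ne_zero _ q6_ne)
    linear_combination (-(q6^(2*m-2))⁻¹ * z6⁻¹ * z6) * hx + (-(z6⁻¹*(q6^(2*m-2))⁻¹)) * hL
      + (-1 : F6) * hz + (-(z6⁻¹*z6)) * hQ
  rw [Finset.prod_congr rfl hterm, Finset.prod_mul_distrib]
  have h2 : ∏ i ∈ Finset.range a, (1 - q6^(a-1-i) * (q6^(m-1)*z6)) = poch6 (q6^(m-1)*z6) a := by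
    rw [poch6]
    exact Finset.prod_range_reflect (fun j => 1 - q6^j * (q6^(m-1)*z6)) a
  rw [h2]
  congr 1
  rw [Finset.prod_mul_distrib, Finset.prod_const]
  have h3 : ∏ i ∈ Finset.range a, (-(q6^(m-a+i)))
      = (-1)^a * q6^(a*(m-a) + ∑ i ∈ Finset.range a, i) := by
    have : ∀ i ∈ Finset.range a, (-(q6^(m-a+i))) = (-1) * q6^(m-a+i) := by intro i _; ring
    rw [Finset.prod_congr rfl this, Finset.prod_mul_distrib, Finset.prod_const,
      Finset.prod_pow_eq_pow_sum]
    congr 2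
    · simp
    rw [Finset.sum_add_distrib, Finset.sum_const]
    simp [mul_comm]
  rw [h3, Finset.card_range]
  have h4 : ((q6^(2*m-2))⁻¹ * z6⁻¹)^a = (q6^((2*m-2)*a))⁻¹ * (z6^a)⁻¹ := by
    rw [mul_pow, inv_pow, inv_pow, ← pow_mul]
  rw [h4]
  ring

lemma zpow_fix (m : ℕ) (hm : 1 ≤ m) : q6 ^ (2 - 2*(m:ℤ)) = (q6^(2*m-2))⁻¹ := by
  have h : (2 - 2*(m:ℤ)) = -((2*m-2 : ℕ) : ℤ) := by
    push_cast
    omega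
  rw [h, zpow_neg, zpow_natCast]

/-! ### The per-term transformation -/

lemma term_eq (n m a : ℕ) (hnm : n < m) (ha : a ≤ m) :
    qbinom6 m a * (q6 ^ n * z6) ^ a * q6 ^ (a * (a - 1)) /
        (poch6 (z6⁻¹ * q6 ^ (2 - 2 * (m : ℤ))) (m - a) * poch6 (q6 ^ n * z6) a)
      * (poch6 (q6^n*z6) m * poch6 (z6⁻¹ * (q6^(2*m-2))⁻¹) m)
    = qbinom6 m a * (-1)^a * q6 ^ (∑ i ∈ Finset.range a, i) * ((q6^(m-1-n))⁻¹)^a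
        * poch6 (q6^(m-1)*z6) a * poch6 (q6^a * (q6^(m-1-n))⁻¹ * (q6^(m-1)*z6)) (m-a) := by
  have hm : 1 ≤ m := by omega
  rw [zpow_fix m hm]
  have hP1 : poch6 (q6^n*z6) m = poch6 (q6^n*z6) a * poch6 (q6^a*(q6^n*z6)) (m-a) := by
    rw [← poch6_add]
    congr 1
    omega
  have hP3 : poch6 (z6⁻¹ * (q6^(2*m-2))⁻¹) m
      = poch6 (z6⁻¹ * (q6^(2*m-2))⁻¹) (m-a)
        * poch6 (q6^(m-a) * (z6⁻¹ * (q6^(2*m-2))⁻¹)) a := by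
    rw [← poch6_add]
    congr 1
    omega
  have hvw : poch6 (q6^a * (q6^(m-1-n))⁻¹ * (q6^(m-1)*z6)) (m-a)
      = poch6 (q6^a * (q6^n*z6)) (m-a) := by
    have hsplit : q6^(m-1) = q6^(m-1-n) * q6^n := by
      rw [← pow_add]
      congr 1
      omega
    have hbase : q6^a * (q6^(m-1-n))⁻¹ * (q6^(m-1)*z6) = q6^a * (q6^n*z6) := by
      rw [hsplit]
      have hinv : (q6^(m-1-n))⁻¹ * q6^(m-1-n) = 1 := inv_mul_cancel₀ (pow_ne_zero _ q6_ne)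
      linear_combination q6^a * q6^n * z6 * hinv
    rw [hbase]
  rw [hP1, hP3, hK_lemma m a ha hm, hvw]
  have hx : (q6^n*z6)^a = q6^(n*a)*z6^a := by rw [mul_pow, ← pow_mul]
  have hv : ((q6^(m-1-n))⁻¹)^a = (q6^((m-1-n)*a))⁻¹ := by rw [inv_pow, ← pow_mul]
  rw [hx, hv]
  have hE : q6^(n*a) * (q6^(a*(a-1)) * (q6^(a*(m-a) + (∑ i ∈ Finset.range a, i))
        * q6^((m-1-n)*a)))
      = q6^(∑ i ∈ Finset.range a, i) * q6^((2*m-2)*a) := by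
    rw [← pow_add, ← pow_add, ← pow_add, ← pow_add]
    congr 1
    rcases a with _ | s
    · simp
    have h1 : (s+1) * ((s+1) - 1) = (s+1) * s := by simp
    rw [h1]
    zify [ha, (show n ≤ m - 1 by omega), (show 1 ≤ m by omega), (show 2 ≤ 2*m by omega)]
    ring
  have n1 : poch6 (q6^n*z6) a ≠ 0 := poch6_qz_ne n a
  have n2 : poch6 (z6⁻¹ * (q6^(2*m-2))⁻¹) (m-a) ≠ 0 := poch6_Y_ne (2*m-2) (m-a)
  have hD : poch6 (z6⁻¹ * (q6^(2*m-2))⁻¹) (m-a) * poch6 (q6^n*z6) a ≠ 0 := mul_ne_zero n2 n1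
  have hC : (poch6 (q6^n*z6) a * poch6 (q6^a*(q6^n*z6)) (m-a)) *
        (poch6 (z6⁻¹ * (q6^(2*m-2))⁻¹) (m-a) *
          ((-1)^a * q6^(a*(m-a) + (∑ i ∈ Finset.range a, i)) * (q6^((2*m-2)*a))⁻¹ * (z6^a)⁻¹
            * poch6 (q6^(m-1)*z6) a))
      = (poch6 (z6⁻¹ * (q6^(2*m-2))⁻¹) (m-a) * poch6 (q6^n*z6) a) *
        (poch6 (q6^a*(q6^n*z6)) (m-a) *
          ((-1)^a * q6^(a*(m-a) + (∑ i ∈ Finset.range a, i)) * (q6^((2*m-2)*a))⁻¹ * (z6^a)⁻¹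
            * poch6 (q6^(m-1)*z6) a)) := by ring
  rw [hC]
  rw [div_mul_eq_mul_div, mul_comm (poch6 (z6⁻¹ * (q6^(2*m-2))⁻¹) (m-a) * poch6 (q6^n*z6) a),
    ← mul_assoc, mul_div_assoc, div_self hD, mul_one]
  have hz : z6^a * (z6^a)⁻¹ = 1 := mul_inv_cancel₀ (pow_ne_zero _ z6_ne)
  have hq1 : q6^((2*m-2)*a) * (q6^((2*m-2)*a))⁻¹ = 1 := mul_inv_cancel₀ (pow_ne_zero _ q6_ne)
  have hq2 : q6^((m-1-n)*a) * (q6^((m-1-n)*a))⁻¹ = 1 := mul_inv_cancel₀ (pow_ne_zero _ q6_ne)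
  set G := qbinom6 m a * (-1)^a * poch6 (q6^(m-1)*z6) a * poch6 (q6^a*(q6^n*z6)) (m-a) with hG
  set X := q6^(n*a) * q6^(a*(a-1)) * q6^(a*(m-a) + (∑ i ∈ Finset.range a, i)) with hX
  linear_combination (G * X * (q6^((2*m-2)*a))⁻¹) * hz
    + (-(G * X * (q6^((2*m-2)*a))⁻¹)) * hq2
    + (G * (q6^((2*m-2)*a))⁻¹ * (q6^((m-1-n)*a))⁻¹) * hE
    + (G * q6^(∑ i ∈ Finset.range a, i) * (q6^((m-1-n)*a))⁻¹) * hq1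

/-! ### Main theorem -/

theorem stmt_6 (n m : ℕ) (hnm : n < m) :
    ∑ a ∈ Finset.range (m + 1),
      qbinom6 m a * (q6 ^ n * z6) ^ a * q6 ^ (a * (a - 1)) /
        (poch6 (z6⁻¹ * q6 ^ (2 - 2 * (m : ℤ))) (m - a) * poch6 (q6 ^ n * z6) a)
    = 0 := by
  have hm : 1 ≤ m := by omega
  set Pp := poch6 (q6^n*z6) m * poch6 (z6⁻¹ * (q6^(2*m-2))⁻¹) m with hPpdef
  have hPp : Pp ≠ 0 := mul_ne_zero (poch6_qz_ne n m) (poch6_Y_ne (2*m-2) m)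
  have hmain : (∑ a ∈ Finset.range (m + 1),
      qbinom6 m a * (q6 ^ n * z6) ^ a * q6 ^ (a * (a - 1)) /
        (poch6 (z6⁻¹ * q6 ^ (2 - 2 * (m : ℤ))) (m - a) * poch6 (q6 ^ n * z6) a)) * Pp = 0 := by
    rw [Finset.sum_mul]
    have hterm : ∀ a ∈ Finset.range (m+1),
        qbinom6 m a * (q6 ^ n * z6) ^ a * q6 ^ (a * (a - 1)) /
          (poch6 (z6⁻¹ * q6 ^ (2 - 2 * (m : ℤ))) (m - a) * poch6 (q6 ^ n * z6) a) * Pp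
        = gb6 m a * (-1)^a * q6 ^ (∑ i ∈ Finset.range a, i) * ((q6^(m-1-n))⁻¹)^a
            * poch6 (q6^(m-1)*z6) a
            * poch6 (q6^a * (q6^(m-1-n))⁻¹ * (q6^(m-1)*z6)) (m-a) := by
      intro a har
      have ha : a ≤ m := by simp at har; omega
      rw [hPpdef, term_eq n m a hnm ha, gb6_eq m a ha]
    rw [Finset.sum_congr rfl hterm, star m ((q6^(m-1-n))⁻¹) (q6^(m-1)*z6)]
    apply Finset.prod_eq_zero (Finset.mem_range.mpr (show m-1-n < m by omega))
    rw [mul_inv_cancel₀ (pow_ne_zero _ q6_ne)]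
    ring
  exact (mul_eq_zero.mp hmain).resolve_right hPp

end
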